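/- Let b > 0 and Δ > 0, and let f(z) = b·exp(−b·z) for z ≥ 0 (the exponential density with rate b). Then for every s ∈ [0,1], ∫_Δ^∞ f(y)^s · f(y − Δ)^{1−s} dy = exp(−b·Δ·s), and consequently −min_{s ∈ [0,1]} log ∫_Δ^∞ f(y)^s f(y−Δ)^{1−s} dy = b·Δ. Hence the diversity gain of the ML detector for exponential propagation delays equals b·Δ. -/

import Mathlib

open MeasureTheory Set

lemma exp_int' (b c : ℝ) (hb : 0 < b) :
    (∫ y in Ioi c, Real.exp (-b * y)) = Real.exp (-b * c) / b := by
  have := integral_comp_mul_left_Ioi (fun x => Real.exp (-x)) c hb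
  simp only [smul_eq_mul] at this
  have h2 : (∫ x in Ioi c, Real.exp (-(b * x))) = b⁻¹ * Real.exp (-(b*c)) := by
    rw [this, integral_exp_neg_Ioi]
  simp only [neg_mul]
  rw [h2]; ring


/-- For exponential propagation delays with rate `b`, the Chernoff integral equals
`exp(−bΔs)` for every `s ∈ [0,1]`, and hence the diversity gain of the ML detector
equals `b·Δ`. -/
theorem ml_diversity_gain_exponential
    (b Δ : ℝ) (hb : 0 < b) (hΔ : 0 < Δ)
    (f : ℝ → ℝ)
    (hf : ∀ z : ℝ, 0 ≤ z → f z = b * Real.exp (-b * z))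
    (hf_zero : ∀ z < (0 : ℝ), f z = 0) :
    (∀ s ∈ Icc (0 : ℝ) 1,
      (∫ y in Ioi Δ, f y ^ s * f (y - Δ) ^ (1 - s)) = Real.exp (-b * Δ * s)) ∧
    (-sInf {x : ℝ | ∃ s ∈ Icc (0 : ℝ) 1,
        x = Real.log (∫ y in Ioi Δ, f y ^ s * f (y - Δ) ^ (1 - s))})
      = b * Δ := by
  have key : ∀ s ∈ Icc (0 : ℝ) 1,
      (∫ y in Ioi Δ, f y ^ s * f (y - Δ) ^ (1 - s)) = Real.exp (-b * Δ * s) := by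
    intro s hs
    have hint : (∫ y in Ioi Δ, f y ^ s * f (y - Δ) ^ (1 - s))
        = ∫ y in Ioi Δ, (b * Real.exp (b * Δ * (1 - s))) * Real.exp (-b * y) := by
      apply setIntegral_congr_fun measurableSet_Ioi
      intro y hy
      simp only [mem_Ioi] at hy
      simp only
      rw [hf y (by linarith), hf (y - Δ) (by linarith)]
      rw [Real.mul_rpow hb.le (Real.exp_nonneg _), Real.mul_rpow hb.le (Real.exp_nonneg _),
        ← Real.exp_mul, ← Real.exp_mul]
      rw [show b ^ s * Real.exp (-b * y * s) * (b ^ (1 - s) * Real.exp (-b * (y - Δ) * (1 - s)))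
          = (b ^ s * b ^ (1 - s)) * Real.exp (-b * y * s + -b * (y - Δ) * (1 - s)) from by
        rw [Real.exp_add]; ring]
      rw [← Real.rpow_add hb, show s + (1 - s) = 1 from by ring, Real.rpow_one,
        show b * Real.exp (b * Δ * (1 - s)) * Real.exp (-b * y)
          = b * Real.exp (b * Δ * (1 - s) + -b * y) from by rw [Real.exp_add]; ring]
      congr 1
      ring
    rw [hint, integral_const_mul, exp_int' b Δ hb,
      show b * Real.exp (b * Δ * (1 - s)) * (Real.exp (-b * Δ) / b)
        = Real.exp (b * Δ * (1 - s)) * Real.exp (-b * Δ) from by field_simp,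
      ← Real.exp_add]
    congr 1
    ring
  refine ⟨key, ?_⟩
  have hset : {x : ℝ | ∃ s ∈ Icc (0 : ℝ) 1,
      x = Real.log (∫ y in Ioi Δ, f y ^ s * f (y - Δ) ^ (1 - s))}
      = {x : ℝ | ∃ s ∈ Icc (0 : ℝ) 1, x = -b * Δ * s} := by
    ext x
    constructor <;> rintro ⟨s, hs, rfl⟩ <;>
      exact ⟨s, hs, by rw [key s hs, Real.log_exp]⟩
  rw [hset]
  have hleast : IsLeast {x : ℝ | ∃ s ∈ Icc (0 : ℝ) 1, x = -b * Δ * s} (-(b * Δ)) := by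
    constructor
    · exact ⟨1, by norm_num, by ring⟩
    · rintro x ⟨s, hs, rfl⟩
      have h1 : 0 < b * Δ := mul_pos hb hΔ
      nlinarith [hs.1, hs.2]
  rw [hleast.csInf_eq]
  ring
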